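/- For a positive definite matrix Θ₀ and symmetric matrix Δ such that Θ₀ + Δ is positive definite, log det(Θ₀) − log det(Θ₀ + Δ) = −Tr(Θ₀⁻¹ Δ) + vec(Δ)ᵀ [∫₀¹ (1−v) (Θ₀+vΔ)⁻¹ ⊗ (Θ₀+vΔ)⁻¹ dv] vec(Δ), where ⊗ denotes the Kronecker product and vec(Δ) is the vectorization of Δ. -/

import Mathlib

open Matrix MeasureTheory
open scoped Kronecker

attribute [local instance] Matrix.frobeniusNormedAddCommGroup Matrix.frobeniusNormedSpace

attribute [local instance] Matrix.frobeniusNormedRing Matrix.frobeniusNormedAlgebra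


lemma posdef_smul' {m : ℕ} {A : Matrix (Fin m) (Fin m) ℝ} (hA : A.PosDef) {c : ℝ}
    (hc : 0 < c) : (c • A).PosDef := by
  refine ⟨?_, fun x hx => ?_⟩
  · simpa [Matrix.IsHermitian, Matrix.conjTranspose_smul] using congrArg (c • ·) hA.1
  · simpa [Finsupp.mul_sum, mul_assoc, mul_left_comm] using mul_pos hc (hA.2 hx)

lemma posdef_seg {m : ℕ} (Θ₀ Δ : Matrix (Fin m) (Fin m) ℝ) (h₀ : Θ₀.PosDef)
    (h₁ : (Θ₀ + Δ).PosDef) {v : ℝ} (hv : v ∈ Set.Icc (0:ℝ) 1) :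
    (Θ₀ + v • Δ).PosDef := by
  have key : Θ₀ + v • Δ = (1 - v) • Θ₀ + v • (Θ₀ + Δ) := by
    rw [sub_smul, one_smul, smul_add]; abel
  rw [key]
  rcases lt_or_eq_of_le hv.2 with h | h
  · rcases lt_or_eq_of_le hv.1 with h' | h'
    · exact (posdef_smul' h₀ (by linarith)).add (posdef_smul' h₁ h')
    · simpa [← h'] using posdef_smul' h₀ (by linarith : (0:ℝ) < 1 - v)
  · subst h; simpa using posdef_smul' h₁ one_pos

open Polynomial in
lemma hasDerivAt_det_line {m : ℕ} (Θ₀ Δ : Matrix (Fin m) (Fin m) ℝ) {v₀ : ℝ}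
    (h : IsUnit (Θ₀ + v₀ • Δ)) :
    HasDerivAt (fun v => (Θ₀ + v • Δ).det)
      ((Θ₀ + v₀ • Δ).det * ((Θ₀ + v₀ • Δ)⁻¹ * Δ).trace) v₀ := by
  set A := Θ₀ + v₀ • Δ with hA
  set M := A⁻¹ * Δ with hM
  set P := (Matrix.det (1 + (X : ℝ[X]) • M.map C)).divX.divX with hP
  set Q := P.comp (X - C v₀) with hQ
  have hinv : A * A⁻¹ = 1 := Matrix.mul_nonsing_inv A ((Matrix.isUnit_iff_isUnit_det A).1 h)
  have key : ∀ v : ℝ, (Θ₀ + v • Δ).det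
      = A.det * (1 + M.trace * (v - v₀) + Q.eval v * (v - v₀) ^ 2) := by
    intro v
    have hv : Θ₀ + v • Δ = A * (1 + (v - v₀) • M) := by
      rw [Matrix.mul_add, mul_one, Matrix.mul_smul, hM, ← Matrix.mul_assoc, hinv,
        Matrix.one_mul, hA, sub_smul]
      abel
    rw [hv, Matrix.det_mul, Matrix.det_one_add_smul, hQ]
    simp [Polynomial.eval_comp, hP]
  have h1 : HasDerivAt (fun v : ℝ => v - v₀) 1 v₀ := (hasDerivAt_id _).sub_const _
  have hQd := Q.hasDerivAt v₀
  have hsq : HasDerivAt (fun v : ℝ => (v - v₀) ^ 2) (2 * (v₀ - v₀) ^ 1 * 1) v₀ := h1.pow 2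
  have hmain := (((hasDerivAt_const v₀ (1:ℝ)).add ((hasDerivAt_const v₀ M.trace).mul h1)).add
      (hQd.mul hsq)).const_mul A.det
  have h2 := hmain.congr_of_eventuallyEq (Filter.Eventually.of_forall key)
  refine h2.congr_deriv ?_
  simp [hM]

lemma hasDerivAt_inv_line {m : ℕ} (Θ₀ Δ : Matrix (Fin m) (Fin m) ℝ) {v₀ : ℝ}
    (h : IsUnit (Θ₀ + v₀ • Δ)) :
    HasDerivAt (fun v => (Θ₀ + v • Δ)⁻¹)
      (-((Θ₀ + v₀ • Δ)⁻¹ * Δ * (Θ₀ + v₀ • Δ)⁻¹)) v₀ := by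
  have hΘ : HasDerivAt (fun v : ℝ => Θ₀ + v • Δ) Δ v₀ := by
    exact (((hasDerivAt_id v₀).smul_const Δ).const_add Θ₀).congr_deriv (one_smul _ _)
  have hF := hasFDerivAt_ringInverse (𝕜 := ℝ) h.unit
  rw [h.unit_spec] at hF
  have hcomp := hF.comp_hasDerivAt v₀ hΘ
  have hfun : (fun v : ℝ => Ring.inverse (Θ₀ + v • Δ)) = fun v => (Θ₀ + v • Δ)⁻¹ := by
    funext v; rw [Matrix.nonsing_inv_eq_ringInverse]
  rw [Function.comp_def, hfun] at hcomp
  refine hcomp.congr_deriv ?_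
  have hu : (↑h.unit⁻¹ : Matrix (Fin m) (Fin m) ℝ) = (Θ₀ + v₀ • Δ)⁻¹ := by
    have h2 := congrArg Ring.inverse h.unit_spec
    rw [Ring.inverse_unit] at h2
    rw [Matrix.nonsing_inv_eq_ringInverse, ← h2]
  simp [ContinuousLinearMap.mulLeftRight_apply, hu]

lemma hasDerivAt_trace_line {m : ℕ} (Θ₀ Δ : Matrix (Fin m) (Fin m) ℝ) {v₀ : ℝ}
    (h : IsUnit (Θ₀ + v₀ • Δ)) :
    HasDerivAt (fun v => ((Θ₀ + v • Δ)⁻¹ * Δ).trace)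
      (-((Θ₀ + v₀ • Δ)⁻¹ * Δ * ((Θ₀ + v₀ • Δ)⁻¹ * Δ)).trace) v₀ := by
  have h1 := (hasDerivAt_inv_line Θ₀ Δ h).mul_const Δ
  have φ := LinearMap.toContinuousLinearMap
    (Matrix.traceLinearMap (Fin m) ℝ ℝ)
  have h2 := (LinearMap.toContinuousLinearMap
    (Matrix.traceLinearMap (Fin m) ℝ ℝ)).hasFDerivAt.comp_hasDerivAt v₀ h1
  change HasDerivAt _ (Matrix.trace (_ : Matrix (Fin m) (Fin m) ℝ)) v₀ at h2
  simpa [Matrix.trace_neg, neg_mul, Matrix.mul_assoc, Function.comp_def,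
    LinearMap.coe_toContinuousLinearMap', Matrix.traceLinearMap_apply] using h2

lemma hasDerivAt_logdet_line {m : ℕ} (Θ₀ Δ : Matrix (Fin m) (Fin m) ℝ) {v₀ : ℝ}
    (h : (Θ₀ + v₀ • Δ).PosDef) :
    HasDerivAt (fun v => Real.log (Θ₀ + v • Δ).det)
      (((Θ₀ + v₀ • Δ)⁻¹ * Δ).trace) v₀ := by
  have hdet := h.det_pos
  have h1 := (hasDerivAt_det_line Θ₀ Δ h.isUnit).log hdet.ne'
  convert h1 using 1
  field_simp

lemma continuous_kron {m : ℕ} :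
    Continuous (fun p : Matrix (Fin m) (Fin m) ℝ × Matrix (Fin m) (Fin m) ℝ =>
      p.1 ⊗ₖ p.2) := by
  let B := (Matrix.kroneckerBilinear (R := ℝ) (α := ℝ)
      (l := Fin m) (m := Fin m) (n := Fin m) (p := Fin m))
  let g : Matrix (Fin m) (Fin m) ℝ →L[ℝ]
      (Matrix (Fin m) (Fin m) ℝ →L[ℝ] Matrix (Fin m × Fin m) (Fin m × Fin m) ℝ) :=
    LinearMap.toContinuousLinearMap
      ((LinearMap.toContinuousLinearMap.toLinearMap).comp B)
  have := g.continuous₂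
  exact this

lemma quad_kron {m : ℕ} (A Δ : Matrix (Fin m) (Fin m) ℝ) (hA : Aᵀ = A) (hΔ : Δᵀ = Δ) :
    (fun p : Fin m × Fin m => Δ p.2 p.1) ⬝ᵥ
      ((A ⊗ₖ A).mulVec (fun p : Fin m × Fin m => Δ p.2 p.1))
    = (A * Δ * (A * Δ)).trace := by
  have hAs : ∀ i j, A j i = A i j := fun i j => by
    conv_lhs => rw [← hA, Matrix.transpose_apply]
  have hΔs : ∀ i j, Δ j i = Δ i j := fun i j => by
    conv_lhs => rw [← hΔ, Matrix.transpose_apply]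
  simp only [dotProduct, Matrix.mulVec, Matrix.kroneckerMap_apply, Matrix.trace, Matrix.diag,
    Matrix.mul_apply, Fintype.sum_prod_type, Finset.mul_sum, Finset.sum_mul]
  refine Finset.sum_congr rfl fun p1 _ => ?_
  conv_rhs => rw [Finset.sum_comm]
  refine Finset.sum_congr rfl fun p2 _ => ?_
  conv_rhs => rw [Finset.sum_comm]
  refine Finset.sum_congr rfl fun q1 _ => ?_
  refine Finset.sum_congr rfl fun q2 _ => ?_
  rw [hAs p2 q2, hΔs q2 q1]
  ring

/-- Second-order Taylor expansion of `log det` with integral remainder in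
Kronecker-product form. -/
theorem logdet_taylor_expansion {m : ℕ}
    (Θ₀ Δ : Matrix (Fin m) (Fin m) ℝ) (h₀ : Θ₀.PosDef) (hΔ : Δ.IsSymm)
    (h₁ : (Θ₀ + Δ).PosDef) :
    Real.log Θ₀.det - Real.log (Θ₀ + Δ).det =
      -((Θ₀⁻¹ * Δ).trace) +
        (fun p : Fin m × Fin m => Δ p.2 p.1) ⬝ᵥ
          ((∫ v in Set.Icc (0 : ℝ) 1,
              (1 - v) • ((Θ₀ + v • Δ)⁻¹ ⊗ₖ (Θ₀ + v • Δ)⁻¹)).mulVec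
            (fun p : Fin m × Fin m => Δ p.2 p.1)) := by
  have hpos : ∀ v ∈ Set.Icc (0:ℝ) 1, (Θ₀ + v • Δ).PosDef :=
    fun v hv => posdef_seg Θ₀ Δ h₀ h₁ hv
  have hunit : ∀ v ∈ Set.Icc (0:ℝ) 1, IsUnit (Θ₀ + v • Δ) :=
    fun v hv => (hpos v hv).isUnit
  set T : ℝ → ℝ := fun v => ((Θ₀ + v • Δ)⁻¹ * Δ).trace with hT
  set ψ : ℝ → ℝ :=
    fun v => (1 - v) * ((Θ₀ + v • Δ)⁻¹ * Δ * ((Θ₀ + v • Δ)⁻¹ * Δ)).trace with hψ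
  set φ : ℝ → ℝ := fun v => (1 - v) * T v + Real.log (Θ₀ + v • Δ).det with hφdef
  -- derivative of φ
  have hφ : ∀ v ∈ Set.uIcc (0:ℝ) 1, HasDerivAt φ (-ψ v) v := by
    intro v hv
    rw [Set.uIcc_of_le zero_le_one] at hv
    have h1 := (((hasDerivAt_const v (1:ℝ)).sub (hasDerivAt_id v)).mul
      (hasDerivAt_trace_line Θ₀ Δ (hunit v hv)))
    have h2 := h1.add (hasDerivAt_logdet_line Θ₀ Δ (hpos v hv))
    refine HasDerivAt.congr_deriv (f := φ) h2 ?_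
    simp only [hψ, hT, id_eq, Pi.sub_apply]
    ring
  -- continuity of ψ on [0,1]
  let traceCLM := LinearMap.toContinuousLinearMap
    (Matrix.traceLinearMap (Fin m) ℝ ℝ)
  have hinvc : ∀ v ∈ Set.Icc (0:ℝ) 1, ContinuousAt (fun v => (Θ₀ + v • Δ)⁻¹) v :=
    fun v hv => (hasDerivAt_inv_line Θ₀ Δ (hunit v hv)).continuousAt
  have hψc : ∀ v ∈ Set.Icc (0:ℝ) 1, ContinuousAt ψ v := by
    intro v hv
    have hc := hinvc v hv
    have hmul : ContinuousAt
        (fun v => (Θ₀ + v • Δ)⁻¹ * Δ * ((Θ₀ + v • Δ)⁻¹ * Δ)) v :=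
      (hc.mul continuousAt_const).mul (hc.mul continuousAt_const)
    exact (continuousAt_const.sub continuousAt_id).mul
      (by exact traceCLM.continuous.continuousAt.comp hmul)
  have hψint : IntervalIntegrable (fun v => -ψ v) MeasureTheory.volume 0 1 := by
    apply ContinuousOn.intervalIntegrable
    intro v hv
    rw [Set.uIcc_of_le zero_le_one] at hv
    exact ((hψc v hv).neg).continuousWithinAt
  have hFTC := intervalIntegral.integral_eq_sub_of_hasDerivAt hφ hψint
  -- values of φ at the endpoints
  have hφ1 : φ 1 = Real.log (Θ₀ + Δ).det := by
    simp [hφdef, one_smul]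
  have hφ0 : φ 0 = (Θ₀⁻¹ * Δ).trace + Real.log Θ₀.det := by
    simp [hφdef, hT]
  -- the integral of the Kronecker integrand
  set Kf : ℝ → Matrix (Fin m × Fin m) (Fin m × Fin m) ℝ :=
    fun v => (1 - v) • ((Θ₀ + v • Δ)⁻¹ ⊗ₖ (Θ₀ + v • Δ)⁻¹) with hKf
  have hKc : ContinuousOn Kf (Set.Icc (0:ℝ) 1) := by
    intro v hv
    have hc := hinvc v hv
    exact (((continuousAt_const.sub continuousAt_id).smul
      ((continuous_kron.continuousAt).comp (hc.prodMk hc)))).continuousWithinAt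
  have hKint :=
    hKc.integrableOn_compact (μ := MeasureTheory.volume) isCompact_Icc
  set x : (Fin m × Fin m) → ℝ := fun p => Δ p.2 p.1 with hx
  set L : Matrix (Fin m × Fin m) (Fin m × Fin m) ℝ →L[ℝ] ℝ :=
    LinearMap.toContinuousLinearMap
      { toFun := fun M => x ⬝ᵥ M.mulVec x
        map_add' := fun M N => by simp [Matrix.add_mulVec, dotProduct_add]
        map_smul' := fun c M => by
          simp [Matrix.smul_mulVec, dotProduct_smul, smul_eq_mul] } with hL
  have hcomm := L.integral_comp_comm hKint
  -- identify L ∘ Kf with ψ on [0,1]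
  have hLK : ∀ v ∈ Set.Icc (0:ℝ) 1, L (Kf v) = ψ v := by
    intro v hv
    have hherm := ((hpos v hv).1.inv)
    have hAt : ((Θ₀ + v • Δ)⁻¹)ᵀ = (Θ₀ + v • Δ)⁻¹ := by
      have := hherm
      rw [Matrix.IsHermitian] at this
      simpa [Matrix.conjTranspose_eq_transpose_of_trivial] using this
    have hΔt : Δᵀ = Δ := hΔ
    have := quad_kron ((Θ₀ + v • Δ)⁻¹) Δ hAt hΔt
    simp only [hL, hKf, LinearMap.coe_toContinuousLinearMap', LinearMap.coe_mk,
      AddHom.coe_mk, _root_.map_smul]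
    simp only [Matrix.smul_mulVec, dotProduct_smul, smul_eq_mul]
    rw [hψ]
    rw [this]
  have hIcc : (∫ v in Set.Icc (0:ℝ) 1, L (Kf v)) = ∫ v in Set.Icc (0:ℝ) 1, ψ v :=
    MeasureTheory.setIntegral_congr_fun measurableSet_Icc hLK
  have hIoc : (∫ v in Set.Icc (0:ℝ) 1, ψ v) = ∫ v in (0:ℝ)..1, ψ v := by
    rw [MeasureTheory.integral_Icc_eq_integral_Ioc, intervalIntegral.integral_of_le zero_le_one]
  have hneg : (∫ v in (0:ℝ)..1, ψ v) = φ 0 - φ 1 := by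
    have := hFTC
    rw [intervalIntegral.integral_neg] at this
    linarith
  -- put everything together
  have hgoalR : x ⬝ᵥ ((∫ v in Set.Icc (0:ℝ) 1, Kf v).mulVec x) = φ 0 - φ 1 := by
    have : x ⬝ᵥ ((∫ v in Set.Icc (0:ℝ) 1, Kf v).mulVec x)
        = L (∫ v in Set.Icc (0:ℝ) 1, Kf v) := rfl
    rw [this]
    refine hcomm.symm.trans ?_
    refine hIcc.trans ?_
    rw [hIoc, hneg]
  rw [hgoalR, hφ0, hφ1]
  ring
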